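/- In the quasi-definite multiple Geronimus setting (B(hf,g)=(f,g)₀, h monic of degree N, d_n^* ≠ 0 for all n), for n ≥ N the monic orthogonal polynomial P_n^* of B admits the determinantal representation P_n^*(t) = (1/d_n^*) · det of the (N+1)×(N+1) matrix whose first column is (P_n(t), P_{n−1}(t), …, P_{n−N}(t))^T and whose remaining columns have entries B(P_{n−i}, t^q) for q = 0,…,N−1 and i = 0,…,N. -/

import Mathlib

open Polynomial

lemma aux_L (L : Polynomial ℝ →ₗ[ℝ] ℝ) (n : ℕ) (hL : ∀ q < n, L (X ^ q) = 0) :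
    ∀ f : Polynomial ℝ, f.degree < (n : WithBot ℕ) → L f = 0 := by
  intro f hf
  by_cases hf0 : f = 0
  · simp [hf0]
  have hnd : f.natDegree < n := (natDegree_lt_iff_degree_lt hf0).mpr hf
  rw [f.as_sum_range' n hnd, map_sum]
  refine Finset.sum_eq_zero fun i hi => ?_
  rw [Finset.mem_range] at hi
  rw [← C_mul_X_pow_eq_monomial, ← smul_eq_C_mul, map_smul, hL i hi, smul_zero]


lemma aux_unique (B : Polynomial ℝ →ₗ[ℝ] Polynomial ℝ →ₗ[ℝ] ℝ)
    (hsym : ∀ f g, B f g = B g f)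
    (Pstar : ℕ → Polynomial ℝ)
    (hQmonic : ∀ n, (Pstar n).Monic) (hQdeg : ∀ n, (Pstar n).natDegree = n)
    (hQorth : ∀ n : ℕ, ∀ q : Polynomial ℝ, q.degree < n → B (Pstar n) q = 0)
    (hQnd : ∀ n, B (Pstar n) (Pstar n) ≠ 0) :
    ∀ n : ℕ, ∀ E : Polynomial ℝ, E.degree < (n : WithBot ℕ) →
      (∀ k < n, B (Pstar k) E = 0) → E = 0 := by
  intro n
  induction n with
  | zero =>
    intro E hE _
    rw [Nat.cast_zero, Nat.WithBot.lt_zero_iff, degree_eq_bot] at hE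
    exact hE
  | succ n ih =>
    intro E hE horth
    set c := E.coeff n with hc
    set E' := E - c • Pstar n with hE'def
    have hdegQk : ∀ k : ℕ, (Pstar k).degree = (k : WithBot ℕ) := fun k => by
      rw [degree_eq_natDegree (hQmonic k).ne_zero, hQdeg k]
    have hE'deg : E'.degree < (n : WithBot ℕ) := by
      rw [degree_lt_iff_coeff_zero]
      intro m hm
      rcases eq_or_lt_of_le hm with rfl | hlt
      · simp only [hE'def, coeff_sub, coeff_smul, smul_eq_mul]
        have h1 : (Pstar n).coeff n = 1 := by
          have := (hQmonic n).coeff_natDegree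
          rwa [hQdeg n] at this
        rw [h1, mul_one, ← hc, sub_self]
      · have h1 : E.coeff m = 0 := by
          apply coeff_eq_zero_of_degree_lt
          refine lt_of_lt_of_le hE ?_
          exact_mod_cast Nat.cast_le.mpr hlt
        have h2 : (Pstar n).coeff m = 0 := by
          apply coeff_eq_zero_of_natDegree_lt
          rw [hQdeg n]; exact hlt
        simp [hE'def, h1, h2]
    have horth' : ∀ k < n, B (Pstar k) E' = 0 := by
      intro k hk
      have h1 : B (Pstar k) (Pstar n) = 0 := by
        rw [hsym]
        exact hQorth n _ (by rw [hdegQk k]; exact_mod_cast hk)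
      simp [hE'def, map_sub, map_smul, h1, horth k (hk.trans (Nat.lt_succ_self n))]
    have hE'0 : E' = 0 := ih E' hE'deg horth'
    have hEeq : E = c • Pstar n := by
      rw [hE'def] at hE'0; linear_combination (norm := ring_nf) hE'0
    have hc0 : c = 0 := by
      have := horth n (Nat.lt_succ_self n)
      rw [hEeq, map_smul, smul_eq_mul] at this
      exact (mul_eq_zero.mp this).resolve_right (hQnd n)
    rw [hEeq, hc0, zero_smul]


/-- The determinant `d_n^*`: for `n ≥ N` it is the `N × N` determinant
`det (B(P_{n-1-j}, t^q))`, and for `n < N` the analogous `n × n` determinant. -/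
noncomputable def dstar (N : ℕ) (B : Polynomial ℝ →ₗ[ℝ] Polynomial ℝ →ₗ[ℝ] ℝ)
    (P : ℕ → Polynomial ℝ) (n : ℕ) : ℝ :=
  (Matrix.of fun q j : Fin (min N n) => B (P (n - 1 - (j : ℕ))) (X ^ (q : ℕ))).det

theorem determinantal_representation (N : ℕ) (hN : 1 ≤ N)
    (h : Polynomial ℝ) (hmonic : h.Monic) (hdeg : h.natDegree = N)
    (B₀ B : Polynomial ℝ →ₗ[ℝ] Polynomial ℝ →ₗ[ℝ] ℝ)
    (hsym₀ : ∀ f g, B₀ f g = B₀ g f) (hsym : ∀ f g, B f g = B g f)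
    (hrel : ∀ f g, B (h * f) g = B₀ f g) (hrel' : ∀ f g, B f (h * g) = B₀ f g)
    (P : ℕ → Polynomial ℝ)
    (hPmonic : ∀ n, (P n).Monic) (hPdeg : ∀ n, (P n).natDegree = n)
    (hPorth : ∀ n : ℕ, ∀ q : Polynomial ℝ, q.degree < n → B₀ (P n) q = 0)
    (hPnd : ∀ n, B₀ (P n) (P n) ≠ 0)
    (hdstar : ∀ n : ℕ, dstar N B P n ≠ 0)
    (Pstar : ℕ → Polynomial ℝ)
    (hQmonic : ∀ n, (Pstar n).Monic) (hQdeg : ∀ n, (Pstar n).natDegree = n)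
    (hQorth : ∀ n : ℕ, ∀ q : Polynomial ℝ, q.degree < n → B (Pstar n) q = 0)
    (hQnd : ∀ n, B (Pstar n) (Pstar n) ≠ 0) :
    ∀ n : ℕ, N ≤ n →
      C (dstar N B P n) * Pstar n =
        (Matrix.of fun i j : Fin (N + 1) =>
          if j = 0 then P (n - (i : ℕ))
          else C (B (P (n - (i : ℕ))) (X ^ ((j : ℕ) - 1)))).det := by
  intro n hn
  classical
  set M : Matrix (Fin (N + 1)) (Fin (N + 1)) (Polynomial ℝ) :=
    Matrix.of fun i j : Fin (N + 1) =>
      if j = 0 then P (n - (i : ℕ))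
      else C (B (P (n - (i : ℕ))) (X ^ ((j : ℕ) - 1))) with hM
  set c : Fin (N + 1) → ℝ := fun i =>
    (Matrix.of fun q j : Fin N => B (P (n - (i.succAbove q : ℕ))) (X ^ (j : ℕ))).det with hcdef
  have hminor : ∀ i : Fin (N + 1), (M.submatrix i.succAbove Fin.succ).det = C (c i) := by
    intro i
    have he : M.submatrix i.succAbove Fin.succ
        = (Matrix.of fun q j : Fin N => B (P (n - (i.succAbove q : ℕ))) (X ^ (j : ℕ))).map C := by
      ext q j
      simp [hM, Matrix.submatrix_apply, Fin.succ_ne_zero, Fin.val_succ]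
    rw [he, hcdef]
    exact (RingHom.map_det C _).symm
  have hdet : M.det = ∑ i : Fin (N + 1), ((-1) ^ (i : ℕ) * c i) • P (n - (i : ℕ)) := by
    rw [Matrix.det_succ_column_zero]
    refine Finset.sum_congr rfl fun i _ => ?_
    rw [hminor i]
    have hM0 : M i 0 = P (n - (i : ℕ)) := by simp [hM]
    rw [hM0, smul_eq_C_mul, C_mul, C_pow, C_neg, C_1]
    ring
  have ha : ∀ q : ℕ, q < N →
      ∑ i : Fin (N + 1), ((-1) ^ (i : ℕ) * c i) * B (P (n - (i : ℕ))) (X ^ q) = 0 := by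
    intro q hq
    set M' : Matrix (Fin (N + 1)) (Fin (N + 1)) ℝ :=
      Matrix.of fun i j : Fin (N + 1) =>
        if j = 0 then B (P (n - (i : ℕ))) (X ^ q)
        else B (P (n - (i : ℕ))) (X ^ ((j : ℕ) - 1)) with hM'
    have hz : M'.det = 0 := by
      refine Matrix.det_zero_of_column_eq (i := 0) (j := ⟨q + 1, by omega⟩) ?_ ?_
      · exact fun hc => by simpa using congrArg Fin.val hc.symm
      · intro k
        have hne : ¬ ((⟨q + 1, by omega⟩ : Fin (N + 1)) = 0) := fun hc => by
          simpa using congrArg Fin.val hc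
        rw [hM', Matrix.of_apply, Matrix.of_apply, if_pos rfl, if_neg hne]
        rfl
    have hminor' : ∀ i : Fin (N + 1), (M'.submatrix i.succAbove Fin.succ).det = c i := by
      intro i
      have he : M'.submatrix i.succAbove Fin.succ
          = Matrix.of fun q' j : Fin N => B (P (n - (i.succAbove q' : ℕ))) (X ^ (j : ℕ)) := by
        ext q' j
        simp [hM', Matrix.submatrix_apply, Fin.succ_ne_zero, Fin.val_succ]
      rw [he, hcdef]
    calc ∑ i : Fin (N + 1), ((-1) ^ (i : ℕ) * c i) * B (P (n - (i : ℕ))) (X ^ q)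
        = M'.det := by
          rw [Matrix.det_succ_column_zero]
          refine Finset.sum_congr rfl fun i _ => ?_
          have hM'0 : M' i 0 = B (P (n - (i : ℕ))) (X ^ q) := by simp [hM']
          rw [hminor' i, hM'0]
          ring
      _ = 0 := hz
  -- the polynomial D
  set Dp : Polynomial ℝ := ∑ i : Fin (N + 1), ((-1) ^ (i : ℕ) * c i) • P (n - (i : ℕ)) with hDp
  -- linearity of B in the first argument applied to Dp
  have hBD : ∀ f : Polynomial ℝ, B Dp f
      = ∑ i : Fin (N + 1), ((-1) ^ (i : ℕ) * c i) * B (P (n - (i : ℕ))) f := by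
    intro f
    rw [hDp, map_sum]
    simp [LinearMap.sum_apply, map_smul, smul_eq_mul]
  have hB₀D : ∀ f : Polynomial ℝ, B₀ Dp f
      = ∑ i : Fin (N + 1), ((-1) ^ (i : ℕ) * c i) * B₀ (P (n - (i : ℕ))) f := by
    intro f
    rw [hDp, map_sum]
    simp [LinearMap.sum_apply, map_smul, smul_eq_mul]
  -- orthogonality of Dp to low-degree monomials
  have hlow : ∀ q < N, B Dp (X ^ q) = 0 := by
    intro q hq
    rw [hBD]
    exact ha q hq
  have hlowf : ∀ f : Polynomial ℝ, f.degree < (N : WithBot ℕ) → B Dp f = 0 :=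
    aux_L (B Dp) N hlow
  have hdegh : h.degree = (N : WithBot ℕ) := by
    rw [degree_eq_natDegree hmonic.ne_zero, hdeg]
  have hall : ∀ q < n, B Dp (X ^ q) = 0 := by
    intro q hq
    by_cases hqN : q < N
    · exact hlow q hqN
    push_neg at hqN
    set s : Polynomial ℝ := X ^ q /ₘ h with hs
    set r : Polynomial ℝ := X ^ q %ₘ h with hr
    have hdiv : r + h * s = X ^ q := modByMonic_add_div (X ^ q) h
    have hBr : B Dp r = 0 := hlowf r ((degree_modByMonic_lt _ hmonic).trans_le hdegh.le)
    have hBhs : B Dp (h * s) = 0 := by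
      rw [hrel', hB₀D]
      refine Finset.sum_eq_zero fun i _ => ?_
      have hsz : B₀ (P (n - (i : ℕ))) s = 0 := by
        apply hPorth
        have h1 : s.natDegree = q - N := by
          rw [hs, natDegree_divByMonic _ hmonic, natDegree_X_pow, hdeg]
        have h2 : q - N < n - (i : ℕ) :=
          lt_of_lt_of_le (Nat.sub_lt_sub_right hqN hq)
            (Nat.sub_le_sub_left (Nat.lt_succ_iff.mp i.isLt) n)
        calc s.degree ≤ (s.natDegree : WithBot ℕ) := degree_le_natDegree
          _ < ((n - (i : ℕ) : ℕ) : WithBot ℕ) := by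
              rw [h1]; exact_mod_cast h2
      rw [hsz, mul_zero]
    calc B Dp (X ^ q) = B Dp (r + h * s) := by rw [hdiv]
      _ = B Dp r + B Dp (h * s) := map_add _ _ _
      _ = 0 := by rw [hBr, hBhs, add_zero]
  have hallf : ∀ f : Polynomial ℝ, f.degree < (n : WithBot ℕ) → B Dp f = 0 :=
    aux_L (B Dp) n hall
  -- identification of c 0 with dstar
  have hmin : min N n = N := min_eq_left hn
  have hds : dstar N B P n
      = (Matrix.of fun q j : Fin N => B (P (n - 1 - (j : ℕ))) (X ^ (q : ℕ))).det := by
    unfold dstar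
    exact Matrix.det_submatrix_equiv_self (finCongr hmin)
      (Matrix.of fun q j : Fin N => B (P (n - 1 - (j : ℕ))) (X ^ (q : ℕ)))
  have hc0 : c 0 = dstar N B P n := by
    have hmat : (Matrix.of fun q j : Fin N =>
          B (P (n - ((0 : Fin (N + 1)).succAbove q : ℕ))) (X ^ (j : ℕ)))
        = Matrix.transpose (Matrix.of fun q j : Fin N => B (P (n - 1 - (j : ℕ))) (X ^ (q : ℕ))) := by
      ext q j
      have hval : n - ((q : ℕ) + 1) = n - 1 - (q : ℕ) := by omega
      simp [Matrix.transpose_apply, hval]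
    show (Matrix.of fun q j : Fin N =>
        B (P (n - ((0 : Fin (N + 1)).succAbove q : ℕ))) (X ^ (j : ℕ))).det = _
    rw [hmat, Matrix.det_transpose, hds]
  -- degree considerations
  have hdegPk : ∀ k : ℕ, (P k).degree = (k : WithBot ℕ) := fun k => by
    rw [degree_eq_natDegree (hPmonic k).ne_zero, hPdeg k]
  have hdegQk : ∀ k : ℕ, (Pstar k).degree = (k : WithBot ℕ) := fun k => by
    rw [degree_eq_natDegree (hQmonic k).ne_zero, hQdeg k]
  set R : Polynomial ℝ := Dp - C (dstar N B P n) * Pstar n with hR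
  have hsplit : R = c 0 • (P n - Pstar n)
      + ∑ i : Fin N, ((-1) ^ ((i : ℕ) + 1) * c i.succ) • P (n - ((i : ℕ) + 1)) := by
    rw [hR, hDp, Fin.sum_univ_succ, smul_sub]
    have h0 : ((-1) ^ (((0 : Fin (N + 1))) : ℕ) * c 0) • P (n - (((0 : Fin (N + 1))) : ℕ))
        = c 0 • P n := by
      norm_num
    have h1 : C (dstar N B P n) * Pstar n = c 0 • Pstar n := by
      rw [← hc0, smul_eq_C_mul]
    have h2 : ∀ i : Fin N, ((-1) ^ ((i.succ : Fin (N + 1)) : ℕ) * c i.succ)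
          • P (n - ((i.succ : Fin (N + 1)) : ℕ))
        = ((-1) ^ ((i : ℕ) + 1) * c i.succ) • P (n - ((i : ℕ) + 1)) := by
      intro i; rw [Fin.val_succ]
    rw [h0, h1, Finset.sum_congr rfl (fun i _ => h2 i)]
    abel
  have hRdeg : R.degree < (n : WithBot ℕ) := by
    rw [hsplit]
    refine lt_of_le_of_lt (degree_add_le _ _) (max_lt ?_ ?_)
    · refine lt_of_le_of_lt (degree_smul_le _ _) ?_
      refine lt_of_lt_of_le (degree_sub_lt ?_ (hPmonic n).ne_zero ?_) ?_
      · rw [hdegPk n, hdegQk n]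
      · rw [(hPmonic n).leadingCoeff, (hQmonic n).leadingCoeff]
      · rw [hdegPk n]
    · refine lt_of_le_of_lt (degree_sum_le _ _) ?_
      refine (Finset.sup_lt_iff (WithBot.bot_lt_coe n)).mpr fun i _ => ?_
      refine lt_of_le_of_lt (degree_smul_le _ _) ?_
      rw [hdegPk]
      have : n - ((i : ℕ) + 1) < n := Nat.sub_lt (lt_of_lt_of_le hN hn) (Nat.succ_pos _)
      exact Nat.cast_lt.mpr this
  have horthR : ∀ k < n, B (Pstar k) R = 0 := by
    intro k hk
    rw [hsym]
    have h1 : B Dp (Pstar k) = 0 :=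
      hallf _ (by rw [hdegQk k]; exact_mod_cast hk)
    have h2 : B (C (dstar N B P n) * Pstar n) (Pstar k) = 0 := by
      rw [← smul_eq_C_mul, map_smul, LinearMap.smul_apply, smul_eq_mul]
      rw [hQorth n _ (by rw [hdegQk k]; exact_mod_cast hk), mul_zero]
    rw [hR, map_sub, LinearMap.sub_apply, h1, h2, sub_zero]
  have hR0 : R = 0 :=
    aux_unique B hsym Pstar hQmonic hQdeg hQorth hQnd n R hRdeg horthR
  rw [hR] at hR0
  rw [hdet]
  exact (sub_eq_zero.mp hR0).symm
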